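/- arXiv:1908.02744 — 4 statements merged into one kernel-verified Lean document; each statement's English description precedes it below -/
import Mathlib

section
/- Let G be a bipartite graph in which every vertex has degree at least 2 and in which every cycle of length at least 6 has a chord. Then every connected component of G contains a cycle of length exactly 4. -/
open SimpleGraph

/-- A cycle walk has a chord. -/
def HasChord {V : Type*} (G : SimpleGraph V) {v : V} (c : G.Walk v v) : Prop :=
  ∃ a b, a ∈ c.support ∧ b ∈ c.support ∧ G.Adj a b ∧ ¬ c.toSubgraph.Adj a b

section Aux

variable {V : Type*} {G : SimpleGraph V}

/-- In a 2-colorable graph, every closed walk has even length. -/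
lemma aux_even_closed_walk (hbip : G.Colorable 2) {u : V} (c : G.Walk u u) :
    Even c.length := by
  obtain ⟨C⟩ := hbip
  have key : ∀ {x y : V} (p : G.Walk x y), (Even p.length ↔ C x = C y) := by
    intro x y p
    induction p with
    | nil => simp
    | @cons x m y h q ih =>
      have hxm : C x ≠ C m := C.valid h
      have hfin : ∀ a b c : Fin 2, a ≠ b → (¬ b = c ↔ a = c) := by decide
      simp only [SimpleGraph.Walk.length_cons, Nat.even_add_one, ih]
      exact hfin _ _ _ hxm
  have := (key c).mpr rfl
  exact this

/-- In a path starting at `u`, there is at most one edge incident to `u`. -/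
lemma aux_unique_first_edge {u v w x : V} {p : G.Walk u v} (hp : p.IsPath)
    (hw : s(u, w) ∈ p.edges) (hx : s(u, x) ∈ p.edges) : w = x := by
  cases p with
  | nil => simp at hw
  | @cons _ m _ h q =>
    have hup : u ∉ q.support := by
      have := hp.support_nodup
      simp only [SimpleGraph.Walk.support_cons, List.nodup_cons] at this
      exact this.1
    have hmem : ∀ y : V, s(u, y) ∈ (SimpleGraph.Walk.cons h q).edges → y = m := by
      intro y hy
      rw [SimpleGraph.Walk.edges_cons, List.mem_cons] at hy
      rcases hy with hy | hy
      · rw [Sym2.eq_iff] at hy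
        rcases hy with ⟨-, rfl⟩ | ⟨h1, h2⟩
        · rfl
        · exact absurd (h1 ▸ h) (by subst h1; exact G.irrefl)
      · exact absurd (SimpleGraph.Walk.fst_mem_support_of_mem_edges q hy) hup
    rw [hmem w hw, hmem x hx]

/-- Appending a new vertex to a path yields a path. -/
lemma aux_concat_path {u v w : V} {p : G.Walk u v} (hp : p.IsPath) (h : G.Adj v w)
    (hw : w ∉ p.support) : (p.concat h).IsPath := by
  rw [SimpleGraph.Walk.isPath_def, SimpleGraph.Walk.support_concat,
    List.nodup_append]
  exact ⟨hp.support_nodup, List.nodup_singleton w, by simpa using fun a (ha : a ∈ p.support) (hey : a = w) => hw (hey ▸ ha)⟩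

/-- In a graph of minimum degree at least `2`, every vertex can reach a cycle. -/
lemma aux_exists_cycle [Fintype V] [DecidableEq V] [DecidableRel G.Adj]
    (hdeg : ∀ v : V, 2 ≤ G.degree v) (v : V) :
    ∃ (u : V) (c : G.Walk u u), c.IsCycle ∧ G.Reachable v u := by
  classical
  set P : ℕ → Prop := fun n => ∃ (u : V) (p : G.Walk v u), p.IsPath ∧ p.length = n with hP
  have hP0 : P 0 := ⟨v, SimpleGraph.Walk.nil, SimpleGraph.Walk.IsPath.nil, rfl⟩
  obtain ⟨u, p, hp, hlen⟩ :=
    Nat.findGreatest_spec (P := P) (Nat.zero_le (Fintype.card V)) hP0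
  set N := Nat.findGreatest P (Fintype.card V) with hN
  have hmax : ∀ (u' : V) (q : G.Walk v u'), q.IsPath → q.length ≤ N := by
    intro u' q hq
    exact Nat.le_findGreatest hq.length_lt.le ⟨u', q, hq, rfl⟩
  -- all neighbors of `u` lie on `p`
  have hsub : ∀ w : V, G.Adj u w → w ∈ p.support := by
    intro w hadj
    by_contra hws
    have := hmax w (p.concat hadj) (aux_concat_path hp hadj hws)
    rw [SimpleGraph.Walk.length_concat, hlen] at this
    omega
  set r := p.reverse with hr
  have hrp : r.IsPath := hp.reverse
  -- find a neighbor `w` of `u` with `s(u,w) ∉ r.edges`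
  have hcard : 1 < (G.neighborFinset u).card := by
    have := hdeg u; rwa [← SimpleGraph.card_neighborFinset_eq_degree] at this
  obtain ⟨w1, hw1, w2, hw2, hne⟩ := Finset.one_lt_card.mp hcard
  have hexists : ∃ w : V, G.Adj u w ∧ s(u, w) ∉ r.edges := by
    by_contra hcon
    push_neg at hcon
    rw [SimpleGraph.mem_neighborFinset] at hw1 hw2
    exact hne (aux_unique_first_edge hrp (hcon w1 hw1) (hcon w2 hw2))
  obtain ⟨w, hadj, hwe⟩ := hexists
  have hwsup : w ∈ r.support := by
    rw [hr, SimpleGraph.Walk.support_reverse, List.mem_reverse]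
    exact hsub w hadj
  set t := r.takeUntil w hwsup with ht
  have htp : t.IsPath := hrp.takeUntil hwsup
  refine ⟨u, SimpleGraph.Walk.cons hadj t.reverse, ?_, ⟨p⟩⟩
  rw [SimpleGraph.Walk.cons_isCycle_iff]
  refine ⟨htp.reverse, ?_⟩
  rw [SimpleGraph.Walk.edges_reverse, List.mem_reverse]
  intro hmem
  exact hwe (r.edges_takeUntil_subset hwsup hmem)

/-- A chord of a cycle yields a strictly shorter cycle through one of its endpoints. -/
lemma aux_shorter [DecidableEq V] {a b : V} (c : G.Walk a a) (hc : c.IsCycle)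
    (hb : b ∈ c.support) (hab : G.Adj a b) (hne : s(a, b) ∉ c.edges) :
    ∃ d : G.Walk a a, d.IsCycle ∧ d.length < c.length := by
  cases c with
  | nil => exact absurd rfl hc.ne_nil
  | @cons _ x _ h q =>
    have hq : q.IsPath ∧ s(a, x) ∉ q.edges := (SimpleGraph.Walk.cons_isCycle_iff q h).mp hc
    have hbq : b ∈ q.support := by
      rcases (by simpa using hb : b = a ∨ b ∈ q.support) with rfl | hbq
      · exact absurd rfl hab.ne'
      · exact hbq
    have hbx : b ≠ x := by
      rintro rfl
      exact hne (by simp [SimpleGraph.Walk.edges_cons])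
    set q2 := q.dropUntil b hbq with hq2
    refine ⟨SimpleGraph.Walk.cons hab q2, ?_, ?_⟩
    · rw [SimpleGraph.Walk.cons_isCycle_iff]
      refine ⟨hq.1.dropUntil hbq, ?_⟩
      intro hmem
      have : s(a, b) ∈ q.edges := q.edges_dropUntil_subset hbq hmem
      exact hne (by simp [SimpleGraph.Walk.edges_cons, this])
    · have hsplit : (q.takeUntil b hbq).length + q2.length = q.length := by
        have := congr_arg SimpleGraph.Walk.length (q.take_spec hbq)
        rwa [SimpleGraph.Walk.length_append] at this
      have htne : (q.takeUntil b hbq).length ≠ 0 := by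
        intro h0
        exact hbx (SimpleGraph.Walk.eq_of_length_eq_zero h0).symm
      simp only [SimpleGraph.Walk.length_cons]
      omega

end Aux

/-- If `G` is a bipartite graph in which every vertex has degree at least 2
and every cycle of length at least 6 has a chord, then every connected component of `G`
contains a cycle of length exactly 4. -/
theorem component_contains_four_cycle
    {V : Type*} [Fintype V] [DecidableEq V] (G : SimpleGraph V) [DecidableRel G.Adj]
    (hbip : G.Colorable 2)
    (hdeg : ∀ v : V, 2 ≤ G.degree v)
    (hchord : ∀ (v : V) (c : G.Walk v v), c.IsCycle → 6 ≤ c.length → HasChord G c) :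
    ∀ v : V, ∃ (u : V) (c : G.Walk u u), c.IsCycle ∧ c.length = 4 ∧ G.Reachable v u := by
  classical
  intro v
  set P : ℕ → Prop := fun n =>
    ∃ (u : V) (c : G.Walk u u), c.IsCycle ∧ G.Reachable v u ∧ c.length = n with hPdef
  have hPex : ∃ n, P n := by
    obtain ⟨u, c, hc, hr⟩ := aux_exists_cycle hdeg v
    exact ⟨c.length, u, c, hc, hr, rfl⟩
  obtain ⟨u, c, hc, hr, hlen⟩ := Nat.find_spec hPex
  set n₀ := Nat.find hPex with hn₀
  have heven : Even n₀ := hlen ▸ aux_even_closed_walk hbip c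
  have h3 : 3 ≤ n₀ := hlen ▸ hc.three_le_length
  have hlt6 : n₀ < 6 := by
    by_contra h6
    push_neg at h6
    obtain ⟨a, b, ha, hb, hab, hnadj⟩ := hchord u c hc (hlen ▸ h6)
    have hne : s(a, b) ∉ c.edges := by
      intro hmem
      exact hnadj ((SimpleGraph.Subgraph.mem_edgeSet).mp
        ((SimpleGraph.Walk.mem_edges_toSubgraph c).mpr hmem))
    -- rotate the cycle to start at `a`
    set c' := c.rotate a ha with hc'
    have hc'cyc : c'.IsCycle := hc.rotate ha
    have hlen' : c'.length = c.length := by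
      have h1 := (SimpleGraph.Walk.rotate_edges c a ha).perm.length_eq
      rwa [SimpleGraph.Walk.length_edges, SimpleGraph.Walk.length_edges] at h1
    have hb' : b ∈ c'.support := by
      have hbt : b ∈ c.support.tail := by
        cases c with
        | nil => exact absurd rfl hc.ne_nil
        | cons h q =>
          rcases (by simpa using hb : b = u ∨ b ∈ q.support) with rfl | hbq
          · simp
          · simpa using hbq
      have := ((SimpleGraph.Walk.support_rotate c a ha).mem_iff (a := b)).mpr hbt
      exact List.mem_of_mem_tail this
    have hne' : s(a, b) ∉ c'.edges := by
      intro hmem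
      exact hne (((SimpleGraph.Walk.rotate_edges c a ha).mem_iff).mp hmem)
    obtain ⟨d, hd, hdlen⟩ := aux_shorter c' hc'cyc hb' hab hne'
    have hra : G.Reachable v a := hr.trans ⟨c.takeUntil a ha⟩
    rw [hlen', hlen] at hdlen
    exact Nat.find_min hPex hdlen ⟨a, d, hd, hra, rfl⟩
  have h4 : n₀ = 4 := by
    obtain ⟨k, hk⟩ := heven
    omega
  exact ⟨u, c, hc, hlen.trans h4 ▸ rfl, hr⟩
end

section
/- Let G be a bipartite graph in which every vertex has degree at least 2 and every cycle of length at least 6 has a chord. If G is disconnected, then G contains two vertex-disjoint 4-cycles lying in distinct connected components. -/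
open SimpleGraph

namespace DisjC

variable {V : Type*} {G : SimpleGraph V}

lemma color_walk_parity (C : G.Coloring (Fin 2)) :
    ∀ {a b : V} (p : G.Walk a b), ((C a).val : ZMod 2) = (C b).val + p.length := by
  intro a b p
  induction p with
  | nil => simp
  | @cons u x w h q ih =>
    have hne : C u ≠ C x := C.valid h
    have key : ∀ m n : Fin 2, m ≠ n → ((m.val : ZMod 2)) = (n.val : ZMod 2) + 1 := by decide
    rw [SimpleGraph.Walk.length_cons]
    rw [key _ _ hne, ih]
    push_cast
    ring

lemma even_length_closed (C : G.Coloring (Fin 2)) {x : V} (c : G.Walk x x) :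
    Even c.length := by
  have h := color_walk_parity C c
  have h0 : ((c.length : ℕ) : ZMod 2) = 0 := by
    linear_combination -h
  rw [ZMod.natCast_eq_zero_iff] at h0
  exact even_iff_two_dvd.mpr h0

lemma eq_of_two_edges {x v y z : V} {q : G.Walk x v} (hq : q.IsPath)
    (hy : s(x, y) ∈ q.edges) (hz : s(x, z) ∈ q.edges) : y = z := by
  cases q with
  | nil => simp at hy
  | cons h t =>
    rw [SimpleGraph.Walk.cons_isPath_iff] at hq
    rw [SimpleGraph.Walk.edges_cons, List.mem_cons] at hy hz
    have hxt : ∀ w, s(x, w) ∈ t.edges → False := fun w hw =>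
      hq.2 (t.fst_mem_support_of_mem_edges hw)
    rcases hy with hy | hy
    · rcases hz with hz | hz
      · exact (Sym2.congr_right.mp hy).trans (Sym2.congr_right.mp hz).symm
      · exact absurd hz (hxt z)
    · exact absurd hy (hxt y)

lemma end_mem_support_tail {x : V} (c : G.Walk x x) (hn : c.length ≠ 0) :
    x ∈ c.support.tail := by
  cases c with
  | nil => simp at hn
  | cons h q =>
    rw [SimpleGraph.Walk.support_cons, List.tail_cons]
    exact q.end_mem_support

/-- A closed walk with a chord yields a strictly shorter cycle through a vertex
of its support. -/
lemma shorter_cycle_of_chord [DecidableEq V] {x a b : V} {c : G.Walk x x}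
    (hc : c.IsCycle) (ha : a ∈ c.support) (hb : b ∈ c.support)
    (hab : G.Adj a b) (he : s(a, b) ∉ c.edges) :
    ∃ (y : V) (c' : G.Walk y y), c'.IsCycle ∧ c'.length < c.length ∧ y ∈ c.support := by
  classical
  have hne : a ≠ b := hab.ne
  set c' : G.Walk a a := c.rotate a ha with hc'def
  have hcyc' : c'.IsCycle := hc.rotate ha
  have hlen' : c'.length = c.length := by
    rw [hc'def, SimpleGraph.Walk.rotate, SimpleGraph.Walk.length_append, Nat.add_comm,
      ← SimpleGraph.Walk.length_append, SimpleGraph.Walk.take_spec]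
  have hlenpos : c.length ≠ 0 := by
    have := hc.three_le_length; omega
  -- b is in the support of c'
  have hbt : b ∈ c.support.tail := by
    by_cases hbx : b = x
    · subst hbx; exact end_mem_support_tail c hlenpos
    · have := SimpleGraph.Walk.support_eq_cons c
      rw [this, List.mem_cons] at hb
      tauto
  have hb' : b ∈ c'.support := by
    have hperm := SimpleGraph.Walk.support_rotate c a ha
    have : b ∈ c'.support.tail := hperm.mem_iff.mpr hbt
    exact List.mem_of_mem_tail this
  set q : G.Walk a b := c'.takeUntil b hb' with hqdef
  set r : G.Walk b a := c'.dropUntil b hb' with hrdef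
  have hqr : q.append r = c' := SimpleGraph.Walk.take_spec c' hb'
  have hlensum : q.length + r.length = c.length := by
    rw [← hlen', ← hqr, SimpleGraph.Walk.length_append]
  -- edges
  have he' : s(a, b) ∉ c'.edges := by
    intro h
    exact he ((SimpleGraph.Walk.rotate_edges c a ha).mem_iff.mp h)
  have heq : s(a, b) ∉ q.edges := fun h => he' (by rw [← hqr, SimpleGraph.Walk.edges_append]; exact List.mem_append_left _ h)
  have her : s(a, b) ∉ r.edges := fun h => he' (by rw [← hqr, SimpleGraph.Walk.edges_append]; exact List.mem_append_right _ h)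
  -- supports
  have htail : c'.support.tail = q.support.tail ++ r.support.tail := by
    have : c'.support = q.support ++ r.support.tail := by
      rw [← hqr, SimpleGraph.Walk.support_append]
    conv_lhs => rw [this, SimpleGraph.Walk.support_eq_cons q]
    simp
  have hnodup : (q.support.tail ++ r.support.tail).Nodup := htail ▸ hcyc'.support_nodup
  rw [List.nodup_append] at hnodup
  obtain ⟨hqn, hrn, hdisj⟩ := hnodup
  have hbq : b ∈ q.support.tail := SimpleGraph.Walk.end_mem_tail_support_of_ne hne q
  have har : a ∈ r.support.tail := SimpleGraph.Walk.end_mem_tail_support_of_ne hne.symm r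
  have hqpath : q.IsPath := by
    rw [SimpleGraph.Walk.isPath_def, SimpleGraph.Walk.support_eq_cons q]
    refine List.Nodup.cons (fun haq => ?_) hqn
    exact hdisj _ haq _ har rfl
  have hrpath : r.IsPath := by
    rw [SimpleGraph.Walk.isPath_def, SimpleGraph.Walk.support_eq_cons r]
    refine List.Nodup.cons (fun hbr => ?_) hrn
    exact hdisj _ hbq _ hbr rfl
  have hq0 : q.length ≠ 0 := fun h => hne (SimpleGraph.Walk.eq_of_length_eq_zero h)
  have hr0 : r.length ≠ 0 := fun h => hne.symm (SimpleGraph.Walk.eq_of_length_eq_zero h)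
  have h3 : 3 ≤ c.length := hc.three_le_length
  by_cases hcmp : q.length ≤ r.length
  · refine ⟨b, SimpleGraph.Walk.cons hab.symm q, ?_, ?_, hb⟩
    · rw [SimpleGraph.Walk.cons_isCycle_iff]
      exact ⟨hqpath, by rwa [Sym2.eq_swap]⟩
    · rw [SimpleGraph.Walk.length_cons]; omega
  · refine ⟨a, SimpleGraph.Walk.cons hab r, ?_, ?_, ha⟩
    · rw [SimpleGraph.Walk.cons_isCycle_iff]
      exact ⟨hrpath, her⟩
    · rw [SimpleGraph.Walk.length_cons]; omega

variable [Fintype V] [DecidableEq V] [DecidableRel G.Adj]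

lemma exists_cycle_reachable (hdeg : ∀ v : V, 2 ≤ G.degree v) (v : V) :
    ∃ (x : V) (c : G.Walk x x), c.IsCycle ∧ G.Reachable v x := by
  by_contra hno
  push_neg at hno
  have key : ∀ k : ℕ, ∃ (x : V) (p : G.Walk v x), p.IsPath ∧ p.length = k := by
    intro k
    induction k with
    | zero => exact ⟨v, SimpleGraph.Walk.nil, SimpleGraph.Walk.IsPath.nil, rfl⟩
    | succ n ih =>
      obtain ⟨x, p, hp, hlen⟩ := ih
      obtain ⟨y, hy, z, hz, hyz⟩ := Finset.one_lt_card.mp (by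
        have h2 := hdeg x
        rw [← SimpleGraph.card_neighborFinset_eq_degree] at h2
        omega : 1 < (G.neighborFinset x).card)
      rw [SimpleGraph.mem_neighborFinset] at hy hz
      -- extension helper
      have ext : ∀ w, G.Adj x w → w ∉ p.support →
          ∃ (x' : V) (p' : G.Walk v x'), p'.IsPath ∧ p'.length = n + 1 := by
        intro w hw hwp
        refine ⟨w, (SimpleGraph.Walk.cons hw.symm p.reverse).reverse, ?_, ?_⟩
        · exact (SimpleGraph.Walk.IsPath.cons (hp.reverse) (by
            rwa [SimpleGraph.Walk.support_reverse, List.mem_reverse])).reverse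
        · simp [hlen]
      -- cycle helper
      have cyc : ∀ w, G.Adj x w → w ∈ p.support → s(x, w) ∉ p.edges → False := by
        intro w hw hwp hwe
        have hq : (p.dropUntil w hwp).IsPath := hp.dropUntil hwp
        have hwe' : s(x, w) ∉ (p.dropUntil w hwp).edges :=
          fun h => hwe (SimpleGraph.Walk.edges_dropUntil_subset p hwp h)
        have : (SimpleGraph.Walk.cons hw (p.dropUntil w hwp)).IsCycle := by
          rw [SimpleGraph.Walk.cons_isCycle_iff]
          exact ⟨hq, hwe'⟩
        exact hno x _ this p.reachable
      by_cases hyp : y ∈ p.support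
      · by_cases hzp : z ∈ p.support
        · -- both on support: at least one gives a cycle
          by_cases hye : s(x, y) ∈ p.edges
          · by_cases hze : s(x, z) ∈ p.edges
            · exact absurd (eq_of_two_edges hp.reverse
                (by rwa [SimpleGraph.Walk.edges_reverse, List.mem_reverse])
                (by rwa [SimpleGraph.Walk.edges_reverse, List.mem_reverse])) hyz
            · exact absurd (cyc z hz hzp hze) not_false
          · exact absurd (cyc y hy hyp hye) not_false
        · exact ext z hz hzp
      · exact ext y hy hyp
  obtain ⟨x, p, hp, hlen⟩ := key (Fintype.card V)
  have := hp.length_lt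
  omega

lemma exists_four_cycle_reachable (hbip : G.Colorable 2)
    (hdeg : ∀ v : V, 2 ≤ G.degree v)
    (hchord : ∀ (v : V) (c : G.Walk v v), c.IsCycle → 6 ≤ c.length → HasChord G c)
    (v : V) :
    ∃ (x : V) (c : G.Walk x x), c.IsCycle ∧ c.length = 4 ∧ G.Reachable v x := by
  obtain ⟨C⟩ := hbip
  set S : Set ℕ := {n | ∃ (x : V) (c : G.Walk x x), c.IsCycle ∧ G.Reachable v x ∧ c.length = n}
    with hS
  have hSne : S.Nonempty := by
    obtain ⟨x, c, hc, hr⟩ := exists_cycle_reachable hdeg v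
    exact ⟨c.length, x, c, hc, hr, rfl⟩
  obtain ⟨x, c, hc, hr, hlen⟩ := Nat.sInf_mem hSne
  have hmin : ∀ n ∈ S, sInf S ≤ n := fun n hn => Nat.sInf_le hn
  have h3 : 3 ≤ c.length := hc.three_le_length
  have heven : Even c.length := even_length_closed C c
  have h6 : ¬ (6 ≤ c.length) := by
    intro h6
    obtain ⟨a, b, ha, hb, hab, hnadj⟩ := hchord x c hc h6
    have he : s(a, b) ∉ c.edges := by
      intro hmem
      exact hnadj (SimpleGraph.Subgraph.mem_edgeSet.mp ((c.mem_edges_toSubgraph).mpr hmem))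
    obtain ⟨y, c', hc', hlt, hy⟩ := shorter_cycle_of_chord hc ha hb hab he
    have hry : G.Reachable v y := hr.trans (c.takeUntil y hy).reachable
    have : sInf S ≤ c'.length := hmin _ ⟨y, c', hc', hry, rfl⟩
    omega
  have h4 : c.length = 4 := by
    rcases heven with ⟨k, hk⟩
    omega
  exact ⟨x, c, hc, h4, hr⟩

end DisjC

/-- If `G` is a disconnected bipartite graph in which every vertex has degree
at least 2 and every cycle of length at least 6 has a chord, then `G` contains two
vertex-disjoint 4-cycles lying in distinct connected components. -/
theorem disjoint_four_cycles_of_disconnected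
    {V : Type*} [Fintype V] [DecidableEq V] (G : SimpleGraph V) [DecidableRel G.Adj]
    (hbip : G.Colorable 2)
    (hdeg : ∀ v : V, 2 ≤ G.degree v)
    (hchord : ∀ (v : V) (c : G.Walk v v), c.IsCycle → 6 ≤ c.length → HasChord G c)
    (hdisc : ¬ G.Preconnected) :
    ∃ (u w : V) (c₁ : G.Walk u u) (c₂ : G.Walk w w),
      c₁.IsCycle ∧ c₁.length = 4 ∧ c₂.IsCycle ∧ c₂.length = 4 ∧
      ¬ G.Reachable u w ∧ ∀ x ∈ c₁.support, x ∉ c₂.support := by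
  rw [SimpleGraph.Preconnected] at hdisc
  push_neg at hdisc
  obtain ⟨u₀, w₀, hur⟩ := hdisc
  obtain ⟨x, c₁, hc₁, hl₁, hrx⟩ := DisjC.exists_four_cycle_reachable hbip hdeg hchord u₀
  obtain ⟨y, c₂, hc₂, hl₂, hry⟩ := DisjC.exists_four_cycle_reachable hbip hdeg hchord w₀
  have hxy : ¬ G.Reachable x y := fun h => hur (hrx.trans (h.trans hry.symm))
  refine ⟨x, y, c₁, c₂, hc₁, hl₁, hc₂, hl₂, hxy, ?_⟩
  intro z hz₁ hz₂
  exact hxy (((c₁.takeUntil z hz₁).reachable).trans ((c₂.takeUntil z hz₂).reachable).symm)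
end

section
/- Let G be a connected bipartite graph in which every vertex has degree at least 2, every cycle of length at least 6 has a chord, and suppose G contains an induced path on 6 vertices v1,...,v6 (a path of length 5 with no chords in G). If there exist vertices w1, w2 distinct from v1,...,v6 such that v1,w1,w2,v6 is a path, then G contains an induced subgraph isomorphic to two 4-cycles sharing exactly one edge (the graph on vertices x1,x2,x3,y1,y2,y3 with edges x1y1, x1y2, x2y1, x2y2, x2y3, x3y2, x3y3). -/
open SimpleGraph

private lemma aux6 {V : Type*} (G : SimpleGraph V)
    (hchord : ∀ (v : V) (c : G.Walk v v), c.IsCycle → 6 ≤ c.length → HasChord G c)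
    (a : Fin 6 → V) (hinj : Function.Injective a)
    (h : ∀ i : Fin 6, G.Adj (a i) (a (i + 1))) :
    ∃ i j : Fin 6, G.Adj (a i) (a j) ∧ j ≠ i + 1 ∧ i ≠ j + 1 := by
  have h50 : G.Adj (a 5) (a 0) := h 5
  have hcyc : (Walk.cons (h 0) (.cons (h 1) (.cons (h 2) (.cons (h 3) (.cons (h 4)
      (.cons h50 .nil))))) : G.Walk (a 0) (a 0)).IsCycle := by
    rw [Walk.isCycle_def, Walk.isTrail_def]
    refine ⟨?_, by simp, ?_⟩
    · simp [List.nodup_cons, Sym2.eq, Sym2.rel_iff', hinj.eq_iff]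
      try decide
    · simp [List.nodup_cons, hinj.eq_iff]
      try decide
  obtain ⟨x, y, hx, hy, hadj, hns⟩ := hchord (a 0)
    (.cons (h 0) (.cons (h 1) (.cons (h 2) (.cons (h 3) (.cons (h 4) (.cons h50 .nil))))))
    hcyc (by simp)
  simp only [Walk.support_cons, Walk.support_nil, List.mem_cons,
    List.not_mem_nil, or_false, List.mem_singleton] at hx hy
  simp only [Walk.toSubgraph, Subgraph.sup_adj, subgraphOfAdj_adj] at hns
  push_neg at hns
  rcases hx with rfl|rfl|rfl|rfl|rfl|rfl|rfl <;> rcases hy with rfl|rfl|rfl|rfl|rfl|rfl|rfl <;>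
    first
      | exact absurd hadj (G.loopless _)
      | exact ⟨_, _, hadj, by decide, by decide⟩
      | simp [Sym2.eq, Sym2.rel_iff', hinj.eq_iff] at hns

private lemma aux8 {V : Type*} (G : SimpleGraph V)
    (hchord : ∀ (v : V) (c : G.Walk v v), c.IsCycle → 6 ≤ c.length → HasChord G c)
    (a : Fin 8 → V) (hinj : Function.Injective a)
    (h : ∀ i : Fin 8, G.Adj (a i) (a (i + 1))) :
    ∃ i j : Fin 8, G.Adj (a i) (a j) ∧ j ≠ i + 1 ∧ i ≠ j + 1 := by
  have h70 : G.Adj (a 7) (a 0) := h 7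
  have hcyc : (Walk.cons (h 0) (.cons (h 1) (.cons (h 2) (.cons (h 3) (.cons (h 4)
      (.cons (h 5) (.cons (h 6) (.cons h70 .nil))))))) : G.Walk (a 0) (a 0)).IsCycle := by
    rw [Walk.isCycle_def, Walk.isTrail_def]
    refine ⟨?_, by simp, ?_⟩
    · simp [List.nodup_cons, Sym2.eq, Sym2.rel_iff', hinj.eq_iff]
      try decide
    · simp [List.nodup_cons, hinj.eq_iff]
      try decide
  obtain ⟨x, y, hx, hy, hadj, hns⟩ := hchord (a 0)
    (.cons (h 0) (.cons (h 1) (.cons (h 2) (.cons (h 3) (.cons (h 4)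
      (.cons (h 5) (.cons (h 6) (.cons h70 .nil))))))))
    hcyc (by simp)
  simp only [Walk.support_cons, Walk.support_nil, List.mem_cons,
    List.not_mem_nil, or_false, List.mem_singleton] at hx hy
  simp only [Walk.toSubgraph, Subgraph.sup_adj, subgraphOfAdj_adj] at hns
  push_neg at hns
  rcases hx with rfl|rfl|rfl|rfl|rfl|rfl|rfl|rfl|rfl <;>
    rcases hy with rfl|rfl|rfl|rfl|rfl|rfl|rfl|rfl|rfl <;>
    first
      | exact absurd hadj (G.loopless _)
      | exact ⟨_, _, hadj, by decide, by decide⟩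
      | simp [Sym2.eq, Sym2.rel_iff', hinj.eq_iff] at hns

private lemma domino {V : Type*} (G : SimpleGraph V) (x y : Fin 3 → V)
    (hx : Function.Injective x) (hy : Function.Injective y) (hxy : ∀ i j, x i ≠ y j)
    (e00 : G.Adj (x 0) (y 0)) (e01 : G.Adj (x 0) (y 1))
    (e10 : G.Adj (x 1) (y 0)) (e11 : G.Adj (x 1) (y 1)) (e12 : G.Adj (x 1) (y 2))
    (e21 : G.Adj (x 2) (y 1)) (e22 : G.Adj (x 2) (y 2))
    (n02 : ¬ G.Adj (x 0) (y 2)) (n20 : ¬ G.Adj (x 2) (y 0))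
    (nxx : ∀ i j, ¬ G.Adj (x i) (x j)) (nyy : ∀ i j, ¬ G.Adj (y i) (y j)) :
    ∃ x y : Fin 3 → V,
      Function.Injective (Sum.elim x y : Fin 3 ⊕ Fin 3 → V) ∧
      (∀ i j : Fin 3, G.Adj (x i) (y j) ↔ (¬(i = 0 ∧ j = 2) ∧ ¬(i = 2 ∧ j = 0))) ∧
      (∀ i j : Fin 3, ¬ G.Adj (x i) (x j)) ∧
      (∀ i j : Fin 3, ¬ G.Adj (y i) (y j)) := by
  refine ⟨x, y, ?_, ?_, nxx, nyy⟩
  · rintro (i|i) (j|j) hEq <;> simp only [Sum.elim_inl, Sum.elim_inr] at hEq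
    · exact congrArg Sum.inl (hx hEq)
    · exact absurd hEq (hxy i j)
    · exact absurd hEq.symm (hxy j i)
    · exact congrArg Sum.inr (hy hEq)
  · intro i j; fin_cases i <;> fin_cases j <;>
      simp [e00, e01, e10, e11, e12, e21, e22, n02, n20, Fin.ext_iff]

set_option maxHeartbeats 2000000 in
/-- Let `G` be a connected bipartite graph with minimum degree at least 2 in
which every cycle of length at least 6 has a chord, containing an induced path `v₁,…,v₆`.  If
there are further vertices `w₁, w₂` with `v₁,w₁,w₂,v₆` a path, then `G` contains an induced
subgraph isomorphic to two 4-cycles sharing exactly one edge. -/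
theorem induced_two_four_cycles_sharing_edge
    {V : Type*} [Fintype V] [DecidableEq V] (G : SimpleGraph V) [DecidableRel G.Adj]
    (hcon : G.Connected) (hbip : G.Colorable 2)
    (hdeg : ∀ v : V, 2 ≤ G.degree v)
    (hchord : ∀ (v : V) (c : G.Walk v v), c.IsCycle → 6 ≤ c.length → HasChord G c)
    (v : Fin 6 → V) (hvinj : Function.Injective v)
    (hvpath : ∀ i j : Fin 6, G.Adj (v i) (v j) ↔ (i.val + 1 = j.val ∨ j.val + 1 = i.val))
    (w₁ w₂ : V) (hw : w₁ ≠ w₂) (hw₁ : ∀ i, w₁ ≠ v i) (hw₂ : ∀ i, w₂ ≠ v i)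
    (h1 : G.Adj (v 0) w₁) (h2 : G.Adj w₁ w₂) (h3 : G.Adj w₂ (v 5)) :
    ∃ x y : Fin 3 → V,
      Function.Injective (Sum.elim x y : Fin 3 ⊕ Fin 3 → V) ∧
      (∀ i j : Fin 3, G.Adj (x i) (y j) ↔ (¬(i = 0 ∧ j = 2) ∧ ¬(i = 2 ∧ j = 0))) ∧
      (∀ i j : Fin 3, ¬ G.Adj (x i) (x j)) ∧
      (∀ i j : Fin 3, ¬ G.Adj (y i) (y j)) := by
  classical
  obtain ⟨C⟩ := hbip
  have nc : ∀ a b : V, C a = C b → ¬ G.Adj a b := fun a b hcab hab => (C.valid hab) hcab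
  have tr : ∀ a b c : Fin 2, a ≠ b → b ≠ c → a = c := by decide
  have h01 : G.Adj (v 0) (v 1) := (hvpath 0 1).mpr (Or.inl rfl)
  have h12 : G.Adj (v 1) (v 2) := (hvpath 1 2).mpr (Or.inl rfl)
  have h23 : G.Adj (v 2) (v 3) := (hvpath 2 3).mpr (Or.inl rfl)
  have h34 : G.Adj (v 3) (v 4) := (hvpath 3 4).mpr (Or.inl rfl)
  have h45 : G.Adj (v 4) (v 5) := (hvpath 4 5).mpr (Or.inl rfl)
  -- colors
  have c01 : C (v 0) ≠ C (v 1) := C.valid h01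
  have c12 : C (v 1) ≠ C (v 2) := C.valid h12
  have c23 : C (v 2) ≠ C (v 3) := C.valid h23
  have c34 : C (v 3) ≠ C (v 4) := C.valid h34
  have c45 : C (v 4) ≠ C (v 5) := C.valid h45
  have cw1 : C (v 0) ≠ C w₁ := C.valid h1
  have cw12 : C w₁ ≠ C w₂ := C.valid h2
  have c02 : C (v 0) = C (v 2) := tr _ _ _ c01 c12
  have c13 : C (v 1) = C (v 3) := tr _ _ _ c12 c23
  have c24 : C (v 2) = C (v 4) := tr _ _ _ c23 c34
  have c35 : C (v 3) = C (v 5) := tr _ _ _ c34 c45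
  have c04 : C (v 0) = C (v 4) := c02.trans c24
  have c15 : C (v 1) = C (v 5) := c13.trans c35
  have c0w2 : C (v 0) = C w₂ := tr _ _ _ cw1 cw12
  have c1w1 : C (v 1) = C w₁ := tr _ _ _ (Ne.symm c01) cw1
  have c2w2 : C (v 2) = C w₂ := c02.symm.trans c0w2
  have c4w2 : C (v 4) = C w₂ := c04.symm.trans c0w2
  have c3w1 : C (v 3) = C w₁ := c13.symm.trans c1w1
  have c5w1 : C (v 5) = C w₁ := c15.symm.trans c1w1
  -- non-adjacency facts (both orientations)
  have nv : ∀ i j : Fin 6, ¬(i.val + 1 = j.val ∨ j.val + 1 = i.val) → ¬ G.Adj (v i) (v j) :=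
    fun i j hnij hab => hnij ((hvpath i j).mp hab)
  have N02 : ¬ G.Adj (v 0) (v 2) := nc _ _ c02
  have N20 : ¬ G.Adj (v 2) (v 0) := nc _ _ c02.symm
  have N04 : ¬ G.Adj (v 0) (v 4) := nc _ _ c04
  have N40 : ¬ G.Adj (v 4) (v 0) := nc _ _ c04.symm
  have N24 : ¬ G.Adj (v 2) (v 4) := nc _ _ c24
  have N42 : ¬ G.Adj (v 4) (v 2) := nc _ _ c24.symm
  have N0w2 : ¬ G.Adj (v 0) w₂ := nc _ _ c0w2
  have Nw20 : ¬ G.Adj w₂ (v 0) := nc _ _ c0w2.symm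
  have N2w2 : ¬ G.Adj (v 2) w₂ := nc _ _ c2w2
  have Nw22 : ¬ G.Adj w₂ (v 2) := nc _ _ c2w2.symm
  have N4w2 : ¬ G.Adj (v 4) w₂ := nc _ _ c4w2
  have Nw24 : ¬ G.Adj w₂ (v 4) := nc _ _ c4w2.symm
  have N13 : ¬ G.Adj (v 1) (v 3) := nc _ _ c13
  have N31 : ¬ G.Adj (v 3) (v 1) := nc _ _ c13.symm
  have N15 : ¬ G.Adj (v 1) (v 5) := nc _ _ c15
  have N51 : ¬ G.Adj (v 5) (v 1) := nc _ _ c15.symm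
  have N35 : ¬ G.Adj (v 3) (v 5) := nc _ _ c35
  have N53 : ¬ G.Adj (v 5) (v 3) := nc _ _ c35.symm
  have N1w1 : ¬ G.Adj (v 1) w₁ := nc _ _ c1w1
  have Nw11 : ¬ G.Adj w₁ (v 1) := nc _ _ c1w1.symm
  have N3w1 : ¬ G.Adj (v 3) w₁ := nc _ _ c3w1
  have Nw13 : ¬ G.Adj w₁ (v 3) := nc _ _ c3w1.symm
  have N5w1 : ¬ G.Adj (v 5) w₁ := nc _ _ c5w1
  have Nw15 : ¬ G.Adj w₁ (v 5) := nc _ _ c5w1.symm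
  have N03 : ¬ G.Adj (v 0) (v 3) := nv 0 3 (by decide)
  have N30 : ¬ G.Adj (v 3) (v 0) := nv 3 0 (by decide)
  have N05 : ¬ G.Adj (v 0) (v 5) := nv 0 5 (by decide)
  have N50 : ¬ G.Adj (v 5) (v 0) := nv 5 0 (by decide)
  have N14 : ¬ G.Adj (v 1) (v 4) := nv 1 4 (by decide)
  have N41 : ¬ G.Adj (v 4) (v 1) := nv 4 1 (by decide)
  have N25 : ¬ G.Adj (v 2) (v 5) := nv 2 5 (by decide)
  have N52 : ¬ G.Adj (v 5) (v 2) := nv 5 2 (by decide)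
  -- distinctness helpers
  have hw₁' : ∀ i, v i ≠ w₁ := fun i => (hw₁ i).symm
  have hw₂' : ∀ i, v i ≠ w₂ := fun i => (hw₂ i).symm
  have hw' : w₂ ≠ w₁ := hw.symm
  -- the 8-cycle
  have hainj : Function.Injective (![v 0, v 1, v 2, v 3, v 4, v 5, w₂, w₁] : Fin 8 → V) := by
    rw [← List.nodup_ofFn]
    simp [hvinj.eq_iff, hw₁', hw₂', hw']
  have hedg : ∀ i : Fin 8, G.Adj ((![v 0, v 1, v 2, v 3, v 4, v 5, w₂, w₁] : Fin 8 → V) i)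
      ((![v 0, v 1, v 2, v 3, v 4, v 5, w₂, w₁] : Fin 8 → V) (i + 1)) := by
    intro i
    fin_cases i
    exacts [h01, h12, h23, h34, h45, h3.symm, h2.symm, h1.symm]
  obtain ⟨i, j, hadj, hji, hij⟩ := aux8 G hchord _ hainj hedg
  have hadj' := hadj.symm
  have H8 : G.Adj w₂ (v 1) ∨ G.Adj w₁ (v 4) ∨ G.Adj w₁ (v 2) ∨ G.Adj w₂ (v 3) := by
    fin_cases i <;> fin_cases j <;>
      (try norm_num [Matrix.cons_val_succ] at hadj) <;> (try norm_num [Matrix.cons_val_succ] at hji) <;>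
        (try norm_num [Matrix.cons_val_succ] at hij) <;>
      first
        | exact absurd (by decide) hji
        | exact absurd (by decide) hij
        | exact absurd hadj (G.loopless _)
        | exact absurd hadj (by assumption)
        | tauto
  clear hadj hadj' hji hij
  -- case A : w₂ ~ v 1
  by_cases hA : G.Adj w₂ (v 1)
  · -- six-cycle v1 v2 v3 v4 v5 w₂ forces w₂ ~ v 3
    have hbinj : Function.Injective (![v 1, v 2, v 3, v 4, v 5, w₂] : Fin 6 → V) := by
      rw [← List.nodup_ofFn]
      simp [hvinj.eq_iff, hw₂']
    have hbedg : ∀ i : Fin 6, G.Adj ((![v 1, v 2, v 3, v 4, v 5, w₂] : Fin 6 → V) i)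
        ((![v 1, v 2, v 3, v 4, v 5, w₂] : Fin 6 → V) (i + 1)) := by
      intro i
      fin_cases i
      exacts [h12, h23, h34, h45, h3.symm, hA]
    obtain ⟨i, j, hadj, hji, hij⟩ := aux6 G hchord _ hbinj hbedg
    have hD : G.Adj w₂ (v 3) := by
      fin_cases i <;> fin_cases j <;>
        (try norm_num [Matrix.cons_val_succ] at hadj) <;> (try norm_num [Matrix.cons_val_succ] at hji) <;>
        (try norm_num [Matrix.cons_val_succ] at hij) <;>
        first
          | exact absurd (by decide) hji
          | exact absurd (by decide) hij
          | exact absurd hadj (G.loopless _)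
          | exact absurd hadj (by assumption)
          | exact hadj
          | exact hadj.symm
    exact domino G ![v 2, w₂, v 4] ![v 1, v 3, v 5]
      (by rw [← List.nodup_ofFn]; simp [hvinj.eq_iff, hw₂', hw₂])
      (by rw [← List.nodup_ofFn]; simp [hvinj.eq_iff])
      (by intro i j; fin_cases i <;> fin_cases j <;> simp [hvinj.eq_iff, hw₂])
      h12.symm h23 hA hD h3 h34.symm h45 N25 N41
      (by intro i j; fin_cases i <;> fin_cases j <;> exact nc _ _ (by first
            | rfl | exact c2w2 | exact c2w2.symm | exact c24 | exact c24.symm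
            | exact c4w2 | exact c4w2.symm))
      (by intro i j; fin_cases i <;> fin_cases j <;> exact nc _ _ (by first
            | rfl | exact c13 | exact c13.symm | exact c15 | exact c15.symm
            | exact c35 | exact c35.symm))
  by_cases hB : G.Adj w₁ (v 4)
  · -- six-cycle v0 v1 v2 v3 v4 w₁ forces w₁ ~ v 2
    have hbinj : Function.Injective (![v 0, v 1, v 2, v 3, v 4, w₁] : Fin 6 → V) := by
      rw [← List.nodup_ofFn]
      simp [hvinj.eq_iff, hw₁']
    have hbedg : ∀ i : Fin 6, G.Adj ((![v 0, v 1, v 2, v 3, v 4, w₁] : Fin 6 → V) i)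
        ((![v 0, v 1, v 2, v 3, v 4, w₁] : Fin 6 → V) (i + 1)) := by
      intro i
      fin_cases i
      exacts [h01, h12, h23, h34, hB.symm, h1.symm]
    obtain ⟨i, j, hadj, hji, hij⟩ := aux6 G hchord _ hbinj hbedg
    have hE : G.Adj w₁ (v 2) := by
      fin_cases i <;> fin_cases j <;>
        (try norm_num [Matrix.cons_val_succ] at hadj) <;> (try norm_num [Matrix.cons_val_succ] at hji) <;>
        (try norm_num [Matrix.cons_val_succ] at hij) <;>
        first
          | exact absurd (by decide) hji
          | exact absurd (by decide) hij
          | exact absurd hadj (G.loopless _)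
          | exact absurd hadj (by assumption)
          | exact hadj
          | exact hadj.symm
    exact domino G ![v 0, v 2, v 4] ![v 1, w₁, v 3]
      (by rw [← List.nodup_ofFn]; simp [hvinj.eq_iff])
      (by rw [← List.nodup_ofFn]; simp [hvinj.eq_iff, hw₁', hw₁])
      (by intro i j; fin_cases i <;> fin_cases j <;> simp [hvinj.eq_iff, hw₁'])
      h01 h1 h12.symm hE.symm h23 hB.symm h34.symm N03 N41
      (by intro i j; fin_cases i <;> fin_cases j <;> exact nc _ _ (by first
            | rfl | exact c02 | exact c02.symm | exact c04 | exact c04.symm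
            | exact c24 | exact c24.symm))
      (by intro i j; fin_cases i <;> fin_cases j <;> exact nc _ _ (by first
            | rfl | exact c1w1 | exact c1w1.symm | exact c13 | exact c13.symm
            | exact c3w1 | exact c3w1.symm))
  -- now ¬hA, ¬hB
  have hA' : ¬ G.Adj (v 1) w₂ := fun h => hA h.symm
  have hB' : ¬ G.Adj (v 4) w₁ := fun h => hB h.symm
  have hCD : G.Adj w₁ (v 2) ∧ G.Adj w₂ (v 3) := by
    rcases H8 with h | h | hC | hD
    · exact absurd h hA
    · exact absurd h hB
    · -- six-cycle w₁ v2 v3 v4 v5 w₂ forces w₂ ~ v 3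
      refine ⟨hC, ?_⟩
      have hbinj : Function.Injective (![w₁, v 2, v 3, v 4, v 5, w₂] : Fin 6 → V) := by
        rw [← List.nodup_ofFn]
        simp [hvinj.eq_iff, hw₁, hw₂', hw]
      have hbedg : ∀ i : Fin 6, G.Adj ((![w₁, v 2, v 3, v 4, v 5, w₂] : Fin 6 → V) i)
          ((![w₁, v 2, v 3, v 4, v 5, w₂] : Fin 6 → V) (i + 1)) := by
        intro i
        fin_cases i
        exacts [hC, h23, h34, h45, h3.symm, h2.symm]
      obtain ⟨i, j, hadj, hji, hij⟩ := aux6 G hchord _ hbinj hbedg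
      fin_cases i <;> fin_cases j <;>
        (try norm_num [Matrix.cons_val_succ] at hadj) <;> (try norm_num [Matrix.cons_val_succ] at hji) <;>
        (try norm_num [Matrix.cons_val_succ] at hij) <;>
        first
          | exact absurd (by decide) hji
          | exact absurd (by decide) hij
          | exact absurd hadj (G.loopless _)
          | exact absurd hadj (by assumption)
          | exact hadj
          | exact hadj.symm
    · -- six-cycle v0 v1 v2 v3 w₂ w₁ forces w₁ ~ v 2
      refine ⟨?_, hD⟩
      have hbinj : Function.Injective (![v 0, v 1, v 2, v 3, w₂, w₁] : Fin 6 → V) := by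
        rw [← List.nodup_ofFn]
        simp [hvinj.eq_iff, hw₁', hw₂', hw']
      have hbedg : ∀ i : Fin 6, G.Adj ((![v 0, v 1, v 2, v 3, w₂, w₁] : Fin 6 → V) i)
          ((![v 0, v 1, v 2, v 3, w₂, w₁] : Fin 6 → V) (i + 1)) := by
        intro i
        fin_cases i
        exacts [h01, h12, h23, hD.symm, h2.symm, h1.symm]
      obtain ⟨i, j, hadj, hji, hij⟩ := aux6 G hchord _ hbinj hbedg
      fin_cases i <;> fin_cases j <;>
        (try norm_num [Matrix.cons_val_succ] at hadj) <;> (try norm_num [Matrix.cons_val_succ] at hji) <;>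
        (try norm_num [Matrix.cons_val_succ] at hij) <;>
        first
          | exact absurd (by decide) hji
          | exact absurd (by decide) hij
          | exact absurd hadj (G.loopless _)
          | exact absurd hadj (by assumption)
          | exact hadj
          | exact hadj.symm
  obtain ⟨hC, hD⟩ := hCD
  exact domino G ![v 0, v 2, w₂] ![v 1, w₁, v 3]
    (by rw [← List.nodup_ofFn]; simp [hvinj.eq_iff, hw₂', hw₂])
    (by rw [← List.nodup_ofFn]; simp [hvinj.eq_iff, hw₁', hw₁])
    (by intro i j; fin_cases i <;> fin_cases j <;> simp [hvinj.eq_iff, hw₁', hw₂, hw'])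
    h01 h1 h12.symm hC.symm h23 h2.symm hD N03 hA
    (by intro i j; fin_cases i <;> fin_cases j <;> exact nc _ _ (by first
          | rfl | exact c02 | exact c02.symm | exact c0w2 | exact c0w2.symm
          | exact c2w2 | exact c2w2.symm))
    (by intro i j; fin_cases i <;> fin_cases j <;> exact nc _ _ (by first
          | rfl | exact c1w1 | exact c1w1.symm | exact c13 | exact c13.symm
          | exact c3w1 | exact c3w1.symm))
end

section
/- Let G be a bipartite graph with parts X and Y in which every vertex has degree at least 2, and suppose G is not complete bipartite and the bipartite complement of G (after removing isolated vertices) is a tree of diameter at most 3. Then G contains vertices x, x', x'' ∈ X and y, y', y'' ∈ Y such that the induced subgraph on these six vertices has exactly the edges {x,y'},{x,y''},{x',y},{x'',y},{x',y'},{x',y''},{x'',y'},{x'',y''} (i.e., K_{3,3} minus a perfect matching edge {x,y}, with {x,y} a non-edge). -/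
open SimpleGraph

/-- Bipartite complement of a bipartite graph on `α ⊕ β`. -/
def bipCompl {α β : Type*} (G : SimpleGraph (α ⊕ β)) : SimpleGraph (α ⊕ β) where
  Adj u v := ∃ a b, ((u = Sum.inl a ∧ v = Sum.inr b) ∨ (u = Sum.inr b ∧ v = Sum.inl a)) ∧
    ¬ G.Adj (Sum.inl a) (Sum.inr b)
  symm := by
    refine ⟨?_⟩
    rintro u v ⟨a, b, h, hn⟩
    exact ⟨a, b, by tauto, hn⟩
  loopless := by
    refine ⟨?_⟩
    rintro u ⟨a, b, (⟨h1, h2⟩ | ⟨h1, h2⟩), hn⟩ <;> simp_all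

lemma bipCompl_adj_iff {α β : Type*} {G : SimpleGraph (α ⊕ β)} {a : α} {b : β} :
    (bipCompl G).Adj (Sum.inl a) (Sum.inr b) ↔ ¬ G.Adj (Sum.inl a) (Sum.inr b) := by
  constructor
  · rintro ⟨a', b', (⟨e1, e2⟩ | ⟨e1, e2⟩), hn⟩
    · obtain rfl : a = a' := by simpa using e1
      obtain rfl : b = b' := by simpa using e2
      exact hn
    · simp at e1
  · intro h; exact ⟨a, b, Or.inl ⟨rfl, rfl⟩, h⟩

lemma bipCompl_adj_left {α β : Type*} {G : SimpleGraph (α ⊕ β)} {a : α} {v : α ⊕ β}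
    (h : (bipCompl G).Adj (Sum.inl a) v) :
    ∃ b, v = Sum.inr b ∧ ¬ G.Adj (Sum.inl a) (Sum.inr b) := by
  obtain ⟨a', b', (⟨e1, e2⟩ | ⟨e1, e2⟩), hn⟩ := h
  · obtain rfl : a = a' := by simpa using e1
    exact ⟨b', e2, hn⟩
  · simp at e1

lemma walk_parity {α β : Type*} {G : SimpleGraph (α ⊕ β)} {S : Set (α ⊕ β)}
    {u v : S} (p : ((bipCompl G).induce S).Walk u v) :
    p.length % 2 = (if u.val.isLeft = v.val.isLeft then 0 else 1) := by
  induction p with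
  | nil => simp
  | @cons u w v h q ih =>
    have hside : u.val.isLeft ≠ w.val.isLeft := by
      have h' : (bipCompl G).Adj u.val w.val := by simpa using h
      obtain ⟨a, b, (⟨e1, e2⟩ | ⟨e1, e2⟩), -⟩ := h' <;> rw [e1, e2] <;> simp
    rw [Walk.length_cons]
    rcases Bool.eq_false_or_eq_true u.val.isLeft with hu | hu <;>
      rcases Bool.eq_false_or_eq_true w.val.isLeft with hw | hw <;>
      rcases Bool.eq_false_or_eq_true v.val.isLeft with hv | hv <;>
      simp [hu, hw, hv] at hside ih ⊢ <;> omega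

lemma exists_mid {V : Type*} {G : SimpleGraph V} {u v : V} :
    ∀ (p : G.Walk u v), p.length = 2 → ∃ w, G.Adj u w ∧ G.Adj w v := by
  rintro (_ | ⟨h, (_ | ⟨h', q⟩)⟩) hl
  · simp at hl
  · simp at hl
  · have h0 : q.length = 0 := by simp only [Walk.length_cons] at hl; omega
    exact ⟨_, h, (Walk.eq_of_length_eq_zero h0) ▸ h'⟩

lemma key_lemma {α β : Type*} {G : SimpleGraph (α ⊕ β)}
    (htree : ((bipCompl G).induce (bipCompl G).support).IsTree)
    (hdiam : ∀ u v, ((bipCompl G).induce (bipCompl G).support).dist u v ≤ 3)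
    {a0 a : α} {b0 b : β}
    (h1 : ¬ G.Adj (Sum.inl a0) (Sum.inr b0)) (h3 : G.Adj (Sum.inl a0) (Sum.inr b))
    (h4 : G.Adj (Sum.inl a) (Sum.inr b0)) : G.Adj (Sum.inl a) (Sum.inr b) := by
  classical
  by_contra h2
  set H := bipCompl G with hH
  set T := H.induce H.support with hT
  have e01 : H.Adj (Sum.inl a0) (Sum.inr b0) := bipCompl_adj_iff.mpr h1
  have eab : H.Adj (Sum.inl a) (Sum.inr b) := bipCompl_adj_iff.mpr h2
  have hA0 : (Sum.inl a0 : α ⊕ β) ∈ H.support := ⟨_, e01⟩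
  have hB0 : (Sum.inr b0 : α ⊕ β) ∈ H.support := ⟨_, e01.symm⟩
  have hA : (Sum.inl a : α ⊕ β) ∈ H.support := ⟨_, eab⟩
  have hB : (Sum.inr b : α ⊕ β) ∈ H.support := ⟨_, eab.symm⟩
  set A0 : H.support := ⟨_, hA0⟩
  set B0 : H.support := ⟨_, hB0⟩
  set A : H.support := ⟨_, hA⟩
  set B : H.support := ⟨_, hB⟩
  have ha0a : a0 ≠ a := by rintro rfl; exact h1 h4
  have hb0b : b0 ≠ b := by rintro rfl; exact h1 h3
  -- distance from A0 to A is 2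
  obtain ⟨p, hp⟩ := htree.isConnected.exists_walk_length_eq_dist A0 A
  have hpar := walk_parity p
  have hpos : T.dist A0 A ≠ 0 := by
    intro h0
    have := Walk.eq_of_length_eq_zero (by rw [hp, h0])
    exact ha0a (by simpa [A0, A] using congrArg Subtype.val this)
  have hd3 : T.dist A0 A ≤ 3 := hdiam A0 A
  have hlen2 : p.length = 2 := by
    simp only [A0, A] at hpar
    simp at hpar
    omega
  obtain ⟨C, hC1, hC2⟩ := exists_mid p hlen2
  have hC1' : H.Adj (Sum.inl a0) C.val := hC1
  obtain ⟨c, hc, ha0c⟩ := bipCompl_adj_left hC1'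
  have hC2' : H.Adj C.val (Sum.inl a) := hC2
  have hac : ¬ G.Adj (Sum.inl a) (Sum.inr c) := by
    obtain ⟨c', hc', h⟩ := bipCompl_adj_left hC2'.symm
    rw [hc] at hc'
    obtain rfl : c = c' := by simpa using hc'
    exact h
  -- the distinctness facts
  have hb0c : b0 ≠ c := by rintro rfl; exact hac h4
  have hcb : c ≠ b := by rintro rfl; exact ha0c h3
  -- build the path B0 - A0 - C - A - B of length 4
  have f1 : T.Adj B0 A0 := by
    simp only [hT, comap_adj, Function.Embedding.coe_subtype]
    exact e01.symm
  have f2 : T.Adj A0 C := hC1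
  have f3 : T.Adj C A := hC2
  have f4 : T.Adj A B := by
    simp only [hT, comap_adj, Function.Embedding.coe_subtype]
    exact eab
  set P2 : T.Walk B0 B := Walk.cons f1 (Walk.cons f2 (Walk.cons f3 (Walk.cons f4 Walk.nil)))
    with hP2def
  have hCval : C = (⟨Sum.inr c, hc ▸ C.property⟩ : H.support) := Subtype.ext hc
  have hP2 : P2.IsPath := by
    rw [hP2def]
    simp only [Walk.isPath_def, Walk.support_cons, Walk.support_nil]
    rw [hCval]
    simp only [List.nodup_cons, List.mem_cons, List.mem_singleton, List.not_mem_nil,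
      List.nodup_nil, A0, B0, A, B]
    refine ⟨?_, ?_, ?_, ?_, by simp⟩ <;>
      simp [Subtype.ext_iff, hb0c, hb0b, ha0a, hcb, Ne.symm]
  -- shortest path from B0 to B
  obtain ⟨q, hq⟩ := htree.isConnected.exists_walk_length_eq_dist B0 B
  have huniq := htree.existsUnique_path B0 B
  have heq : P2 = q.bypass := huniq.unique hP2 q.bypass_isPath
  have hlb : q.bypass.length ≤ q.length := Walk.length_bypass_le q
  have h4len : P2.length = 4 := by simp [hP2def]
  have : T.dist B0 B ≤ 3 := hdiam B0 B
  rw [heq] at h4len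
  omega

/-- If `G` is bipartite with minimum degree at least 2, not complete
bipartite, and the bipartite complement of `G` (after removing isolated vertices) is a tree
of diameter at most 3, then `G` contains an induced `K₃,₃` minus an edge `{x,y}`. -/
theorem induced_K33_minus_edge
    {α β : Type*} [Fintype α] [Fintype β] [DecidableEq α] [DecidableEq β]
    (G : SimpleGraph (α ⊕ β)) [DecidableRel G.Adj]
    (hX : ∀ a a' : α, ¬ G.Adj (Sum.inl a) (Sum.inl a'))
    (hY : ∀ b b' : β, ¬ G.Adj (Sum.inr b) (Sum.inr b'))
    (hdeg : ∀ v : α ⊕ β, 2 ≤ G.degree v)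
    (hnc : ¬ ∀ (a : α) (b : β), G.Adj (Sum.inl a) (Sum.inr b))
    (htree : ((bipCompl G).induce (bipCompl G).support).IsTree)
    (hdiam : ∀ u v, ((bipCompl G).induce (bipCompl G).support).dist u v ≤ 3) :
    ∃ (x x' x'' : α) (y y' y'' : β),
      x ≠ x' ∧ x ≠ x'' ∧ x' ≠ x'' ∧ y ≠ y' ∧ y ≠ y'' ∧ y' ≠ y'' ∧
      ¬ G.Adj (Sum.inl x) (Sum.inr y) ∧
      G.Adj (Sum.inl x) (Sum.inr y') ∧ G.Adj (Sum.inl x) (Sum.inr y'') ∧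
      G.Adj (Sum.inl x') (Sum.inr y) ∧ G.Adj (Sum.inl x'') (Sum.inr y) ∧
      G.Adj (Sum.inl x') (Sum.inr y') ∧ G.Adj (Sum.inl x') (Sum.inr y'') ∧
      G.Adj (Sum.inl x'') (Sum.inr y') ∧ G.Adj (Sum.inl x'') (Sum.inr y'') := by
  push_neg at hnc
  obtain ⟨a0, b0, h1⟩ := hnc
  have twoN : ∀ v : α ⊕ β, ∃ u1 u2, u1 ≠ u2 ∧ G.Adj v u1 ∧ G.Adj v u2 := by
    intro v
    have h2 := hdeg v
    rw [← card_neighborFinset_eq_degree] at h2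
    have hc : 1 < (G.neighborFinset v).card := by omega
    obtain ⟨u1, hu1, u2, hu2, hne⟩ := Finset.one_lt_card.mp hc
    exact ⟨u1, u2, hne, (mem_neighborFinset _ _ _).mp hu1, (mem_neighborFinset _ _ _).mp hu2⟩
  obtain ⟨v1, v2, hv12, hv1, hv2⟩ := twoN (Sum.inl a0)
  obtain ⟨y', hy'⟩ : ∃ y', v1 = Sum.inr y' := by
    cases v1 with
    | inl a' => exact absurd hv1 (hX a0 a')
    | inr y' => exact ⟨y', rfl⟩
  obtain ⟨y'', hy''⟩ : ∃ y'', v2 = Sum.inr y'' := by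
    cases v2 with
    | inl a' => exact absurd hv2 (hX a0 a')
    | inr y'' => exact ⟨y'', rfl⟩
  subst hy' hy''
  obtain ⟨w1, w2, hw12, hw1, hw2⟩ := twoN (Sum.inr b0)
  obtain ⟨x', hx'⟩ : ∃ x', w1 = Sum.inl x' := by
    cases w1 with
    | inr b' => exact absurd hw1 (hY b0 b')
    | inl x' => exact ⟨x', rfl⟩
  obtain ⟨x'', hx''⟩ : ∃ x'', w2 = Sum.inl x'' := by
    cases w2 with
    | inr b' => exact absurd hw2 (hY b0 b')
    | inl x'' => exact ⟨x'', rfl⟩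
  subst hx' hx''
  have hy'ne : y' ≠ y'' := fun h => hv12 (by rw [h])
  have hx'ne : x' ≠ x'' := fun h => hw12 (by rw [h])
  have hy0' : b0 ≠ y' := by rintro rfl; exact h1 hv1
  have hy0'' : b0 ≠ y'' := by rintro rfl; exact h1 hv2
  have hx0' : a0 ≠ x' := by rintro rfl; exact h1 hw1.symm
  have hx0'' : a0 ≠ x'' := by rintro rfl; exact h1 hw2.symm
  refine ⟨a0, x', x'', b0, y', y'', hx0', hx0'', hx'ne, hy0', hy0'', hy'ne, h1,
    hv1, hv2, hw1.symm, hw2.symm, ?_, ?_, ?_, ?_⟩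
  · exact key_lemma htree hdiam h1 hv1 hw1.symm
  · exact key_lemma htree hdiam h1 hv2 hw1.symm
  · exact key_lemma htree hdiam h1 hv1 hw2.symm
  · exact key_lemma htree hdiam h1 hv2 hw2.symm
end
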